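/- arXiv:1007.5440 — 2 statements merged into one kernel-verified Lean document; each statement's English description precedes it below -/
import Mathlib

section
/- Let a = (f_1,…,f_r) ⊆ R = k[x_0,…,x_n] and b = (g_1,…,g_s) ⊆ S = k[y_0,…,y_m] be homogeneous ideals with deg f_i = d_i and deg g_j = e_j, and let I ⊆ P = k[z_{ij}] be the ideal defining the Segre product Z = V_+(a) × V_+(b) ⊆ P^N. For i = 1,…,r and l = 0,…,m set (f_i)_l = f_i(z_{0l},…,z_{nl}), and for j = 1,…,s and t = 0,…,n set (g_j)_t = g_j(z_{t0},…,z_{tm}); let J′ be the ideal of P generated by all the (f_i)_l and (g_j)_t, and let I_2(Z) be the ideal generated by the 2×2 minors of the matrix (z_{ij}). Then √I = √(I_2(Z) + J′). -/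
/-!
STATEMENT 6: Let `a = (f₁,…,f_r) ⊆ R = k[x₀,…,xₙ]` and `b = (g₁,…,g_s) ⊆ S = k[y₀,…,y_m]`
be homogeneous ideals with `deg fᵢ = dᵢ` and `deg gⱼ = eⱼ`, and let `I ⊆ P = k[z_{ij}]` be
the ideal defining the Segre product `Z = V₊(a) × V₊(b) ⊆ ℙᴺ`.  For `i = 1,…,r` and
`l = 0,…,m` set `(fᵢ)_l = fᵢ(z_{0l},…,z_{nl})`, and for `j = 1,…,s` and `t = 0,…,n` set
`(gⱼ)_t = gⱼ(z_{t0},…,z_{tm})`; let `J′` be the ideal of `P` generated by all the `(fᵢ)_l`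
and `(gⱼ)_t`, and let `I₂(Z)` be the ideal generated by the 2×2 minors of the matrix
`(z_{ij})`.  Then `√I = √(I₂(Z) + J′)`.

The ideal `I` is realised as the kernel of the `k`-algebra map
`P → (R/a) ⊗ (S/b) ≅ (R ⊗ S)/(aᵉ + bᵉ)` sending `z_{ij}` to the class of `xᵢyⱼ`; this kernel
coincides with the kernel of `P → (R/a) # (S/b)` since the Segre product `#` is a direct
summand (in particular a subring) of the tensor product.
-/

open MvPolynomial

/-- The ideal of `P = k[z_{ij}]` defining the Segre product
`V₊(a) × V₊(b) ⊆ ℙ^{nm+n+m}`: the kernel of the map `z_{ij} ↦ x_i y_j (mod a,b)`. -/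
noncomputable def segreIdeal (k : Type*) [Field k] (n m : ℕ)
    (a : Ideal (MvPolynomial (Fin (n+1)) k)) (b : Ideal (MvPolynomial (Fin (m+1)) k)) :
    Ideal (MvPolynomial (Fin (n+1) × Fin (m+1)) k) :=
  RingHom.ker (MvPolynomial.aeval (R := k) (fun p : Fin (n+1) × Fin (m+1) =>
    Ideal.Quotient.mk
      (a.map (MvPolynomial.rename (Sum.inl : Fin (n+1) → Fin (n+1) ⊕ Fin (m+1)))
        ⊔ b.map (MvPolynomial.rename (Sum.inr : Fin (m+1) → Fin (n+1) ⊕ Fin (m+1))))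
      (X (Sum.inl p.1) * X (Sum.inr p.2))))

/-- The ideal generated by the `2 × 2`-minors of the generic `(n+1) × (m+1)` matrix
`(z_{ij})`. -/
noncomputable def minorsIdeal (k : Type*) [Field k] (n m : ℕ) :
    Ideal (MvPolynomial (Fin (n+1) × Fin (m+1)) k) :=
  Ideal.span {F | ∃ (i i' : Fin (n+1)) (j j' : Fin (m+1)),
    F = X (i, j) * X (i', j') - X (i, j') * X (i', j)}

/-- Scaling a homogeneous polynomial's variables by `t` multiplies the value by `t ^ d`. -/
lemma eval₂_mul_left_of_isHomogeneous {k L σ : Type*} [CommSemiring k] [CommSemiring L]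
    (κ : k →+* L) {φ : MvPolynomial σ k} {d : ℕ} (hφ : φ.IsHomogeneous d)
    (t : L) (w : σ → L) :
    eval₂ κ (fun i => t * w i) φ = t ^ d * eval₂ κ w φ := by
  conv_lhs => rw [φ.as_sum]
  conv_rhs => rw [φ.as_sum]
  rw [eval₂_sum, eval₂_sum, Finset.mul_sum]
  refine Finset.sum_congr rfl fun u hu => ?_
  rw [eval₂_monomial, eval₂_monomial]
  have hdeg : ∑ i ∈ u.support, u i = d := by
    have h := hφ (MvPolynomial.mem_support_iff.mp hu)
    rw [show (1 : σ → ℕ) = fun _ => 1 from rfl, ← Finsupp.degree_eq_weight_one] at h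
    exact h
  simp only [Finsupp.prod]
  rw [Finset.prod_congr rfl (fun i _ => mul_pow t (w i) (u i)), Finset.prod_mul_distrib,
    Finset.prod_pow_eq_pow_sum, hdeg]
  ring

/-- Membership in the Segre ideal, via the Segre substitution into the polynomial ring. -/
lemma mem_segreIdeal {k : Type*} [Field k] {n m : ℕ}
    (a : Ideal (MvPolynomial (Fin (n+1)) k)) (b : Ideal (MvPolynomial (Fin (m+1)) k))
    (F : MvPolynomial (Fin (n+1) × Fin (m+1)) k) :
    F ∈ segreIdeal k n m a b ↔
      aeval (fun p : Fin (n+1) × Fin (m+1) => X (Sum.inl p.1) * X (Sum.inr p.2)) F ∈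
        a.map (rename (Sum.inl : Fin (n+1) → Fin (n+1) ⊕ Fin (m+1)))
          ⊔ b.map (rename (Sum.inr : Fin (m+1) → Fin (n+1) ⊕ Fin (m+1))) := by
  set c := a.map (rename (Sum.inl : Fin (n+1) → Fin (n+1) ⊕ Fin (m+1)))
      ⊔ b.map (rename (Sum.inr : Fin (m+1) → Fin (n+1) ⊕ Fin (m+1)))
  have key : (aeval (R := k) (fun p : Fin (n+1) × Fin (m+1) =>
      Ideal.Quotient.mk c (X (Sum.inl p.1) * X (Sum.inr p.2)))) F
      = Ideal.Quotient.mk c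
        (aeval (fun p : Fin (n+1) × Fin (m+1) => X (Sum.inl p.1) * X (Sum.inr p.2)) F) := by
    have h := comp_aeval (R := k) (φ := Ideal.Quotient.mkₐ k c)
      (f := fun p : Fin (n+1) × Fin (m+1) => X (Sum.inl p.1) * X (Sum.inr p.2))
    have h2 := DFunLike.congr_fun h.symm F
    simpa [Ideal.Quotient.mkₐ_eq_mk] using h2
  rw [segreIdeal, RingHom.mem_ker, key, Ideal.Quotient.eq_zero_iff_mem]

/-- The Segre substitution of a row-substituted homogeneous polynomial. -/
lemma psi_subst_row {k : Type*} [Field k] {n m : ℕ} (q : MvPolynomial (Fin (n+1)) k) {dq : ℕ}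
    (hq : q.IsHomogeneous dq) (l : Fin (m+1)) :
    aeval (R := k) (fun p : Fin (n+1) × Fin (m+1) => X (Sum.inl p.1) * X (Sum.inr p.2))
        (aeval (fun i : Fin (n+1) => X (i, l)) q)
      = X (Sum.inr l : Fin (n+1) ⊕ Fin (m+1)) ^ dq * rename Sum.inl q := by
  set Ψ : MvPolynomial (Fin (n+1) × Fin (m+1)) k →ₐ[k]
      MvPolynomial (Fin (n+1) ⊕ Fin (m+1)) k :=
    aeval (fun p : Fin (n+1) × Fin (m+1) => X (Sum.inl p.1) * X (Sum.inr p.2)) with hΨ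
  have h1 : Ψ (aeval (fun i : Fin (n+1) => X (i, l)) q)
      = aeval (fun i : Fin (n+1) => Ψ (X (i, l))) q :=
    DFunLike.congr_fun (comp_aeval (φ := Ψ) (f := fun i : Fin (n+1) => X (i, l))) q
  show Ψ _ = _
  rw [h1]
  have h2 : (fun i : Fin (n+1) => Ψ (X (i, l)))
      = fun i => X (Sum.inr l) * X (Sum.inl i) := by
    funext i; simp [hΨ, mul_comm]
  rw [h2, aeval_def, algebraMap_eq, eval₂_mul_left_of_isHomogeneous _ hq]
  congr 1
  rw [rename_eq_aeval, aeval_def, algebraMap_eq, Function.comp_def]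

/-- The Segre substitution of a column-substituted homogeneous polynomial. -/
lemma psi_subst_col {k : Type*} [Field k] {n m : ℕ} (q : MvPolynomial (Fin (m+1)) k) {dq : ℕ}
    (hq : q.IsHomogeneous dq) (t : Fin (n+1)) :
    aeval (R := k) (fun p : Fin (n+1) × Fin (m+1) => X (Sum.inl p.1) * X (Sum.inr p.2))
        (aeval (fun j : Fin (m+1) => X (t, j)) q)
      = X (Sum.inl t : Fin (n+1) ⊕ Fin (m+1)) ^ dq * rename Sum.inr q := by
  set Ψ : MvPolynomial (Fin (n+1) × Fin (m+1)) k →ₐ[k]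
      MvPolynomial (Fin (n+1) ⊕ Fin (m+1)) k :=
    aeval (fun p : Fin (n+1) × Fin (m+1) => X (Sum.inl p.1) * X (Sum.inr p.2)) with hΨ
  have h1 : Ψ (aeval (fun j : Fin (m+1) => X (t, j)) q)
      = aeval (fun j : Fin (m+1) => Ψ (X (t, j))) q :=
    DFunLike.congr_fun (comp_aeval (φ := Ψ) (f := fun j : Fin (m+1) => X (t, j))) q
  show Ψ _ = _
  rw [h1]
  have h2 : (fun j : Fin (m+1) => Ψ (X (t, j)))
      = fun j => X (Sum.inl t) * X (Sum.inr j) := by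
    funext j; simp [hΨ]
  rw [h2, aeval_def, algebraMap_eq, eval₂_mul_left_of_isHomogeneous _ hq]
  congr 1
  rw [rename_eq_aeval, aeval_def, algebraMap_eq, Function.comp_def]

set_option maxHeartbeats 2000000 in
set_option synthInstance.maxHeartbeats 2000000 in
theorem segre_radical_eq_minors_sup_diagonal_substitutions
    (k : Type*) [Field k] (n m : ℕ) (r s : ℕ)
    (f : Fin r → MvPolynomial (Fin (n+1)) k) (g : Fin s → MvPolynomial (Fin (m+1)) k)
    (d : Fin r → ℕ) (e : Fin s → ℕ)
    (hf : ∀ i, (f i).IsHomogeneous (d i)) (hg : ∀ j, (g j).IsHomogeneous (e j))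
    -- the substituted polynomials (fᵢ)_l and (gⱼ)_t :
    (J' : Ideal (MvPolynomial (Fin (n+1) × Fin (m+1)) k))
    (hJ' : J' = Ideal.span
      ((Set.range fun p : Fin r × Fin (m+1) =>
          MvPolynomial.aeval (fun i : Fin (n+1) => X (i, p.2)) (f p.1)) ∪
       (Set.range fun p : Fin s × Fin (n+1) =>
          MvPolynomial.aeval (fun j : Fin (m+1) => X (p.2, j)) (g p.1)))) :
    (segreIdeal k n m (Ideal.span (Set.range f)) (Ideal.span (Set.range g))).radical
      = (minorsIdeal k n m ⊔ J').radical := by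
  set a : Ideal (MvPolynomial (Fin (n+1)) k) := Ideal.span (Set.range f) with ha
  set b : Ideal (MvPolynomial (Fin (m+1)) k) := Ideal.span (Set.range g) with hb
  -- Easy inclusion: I₂ + J' ≤ I.
  have hA : minorsIdeal k n m ⊔ J' ≤ segreIdeal k n m a b := by
    apply sup_le
    · rw [minorsIdeal, Ideal.span_le]
      rintro F ⟨i, i', j, j', rfl⟩
      refine SetLike.mem_coe.mpr ((mem_segreIdeal a b _).mpr ?_)
      have hz : aeval (R := k)
          (fun p : Fin (n+1) × Fin (m+1) =>
            (X (Sum.inl p.1) * X (Sum.inr p.2) : MvPolynomial (Fin (n+1) ⊕ Fin (m+1)) k))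
          (X (i, j) * X (i', j') - X (i, j') * X (i', j) :
            MvPolynomial (Fin (n+1) × Fin (m+1)) k) = 0 := by
        simp only [map_sub, map_mul, aeval_X]
        ring
      rw [hz]
      exact zero_mem _
    · rw [hJ', Ideal.span_le]
      rintro F (⟨p, rfl⟩ | ⟨p, rfl⟩) <;>
        refine SetLike.mem_coe.mpr ((mem_segreIdeal a b _).mpr ?_)
      · rw [psi_subst_row (f p.1) (hf p.1) p.2]
        exact Ideal.mem_sup_left (Ideal.mul_mem_left _ _
          (Ideal.mem_map_of_mem _ (Ideal.subset_span ⟨p.1, rfl⟩)))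
      · rw [psi_subst_col (g p.1) (hg p.1) p.2]
        exact Ideal.mem_sup_right (Ideal.mul_mem_left _ _
          (Ideal.mem_map_of_mem _ (Ideal.subset_span ⟨p.1, rfl⟩)))
  -- Hard inclusion: every prime containing I₂ + J' contains I.
  have hB : ∀ 𝔭 : Ideal (MvPolynomial (Fin (n+1) × Fin (m+1)) k), 𝔭.IsPrime →
      minorsIdeal k n m ⊔ J' ≤ 𝔭 → segreIdeal k n m a b ≤ 𝔭 := by
    intro 𝔭 hp h𝔭
    haveI := hp
    set ε : MvPolynomial (Fin (n+1) × Fin (m+1)) k →+*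
        FractionRing (MvPolynomial (Fin (n+1) × Fin (m+1)) k ⧸ 𝔭) :=
      (algebraMap (MvPolynomial (Fin (n+1) × Fin (m+1)) k ⧸ 𝔭)
          (FractionRing (MvPolynomial (Fin (n+1) × Fin (m+1)) k ⧸ 𝔭))).comp
        (Ideal.Quotient.mk 𝔭) with hε
    have hker : ∀ F, ε F = 0 ↔ F ∈ 𝔭 := by
      intro F
      rw [hε, RingHom.comp_apply,
        map_eq_zero_iff _ (IsFractionRing.injective
          (MvPolynomial (Fin (n+1) × Fin (m+1)) k ⧸ 𝔭)
          (FractionRing (MvPolynomial (Fin (n+1) × Fin (m+1)) k ⧸ 𝔭))),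
        Ideal.Quotient.eq_zero_iff_mem]
    set κ : k →+* FractionRing (MvPolynomial (Fin (n+1) × Fin (m+1)) k ⧸ 𝔭) :=
      ε.comp C with hκ
    set M : Fin (n+1) → Fin (m+1) → FractionRing (MvPolynomial (Fin (n+1) × Fin (m+1)) k ⧸ 𝔭) :=
      fun i j => ε (X (i, j)) with hM
    have hεeval : ∀ F, ε F = eval₂ κ (fun p => M p.1 p.2) F := by
      intro F
      conv_lhs => rw [← eval₂_eta F]
      rw [eval₂_comp_left]
      have h2 : (⇑ε ∘ X) = fun p : Fin (n+1) × Fin (m+1) => M p.1 p.2 := by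
        funext p; rfl
      rw [h2]
    have hminor : ∀ (i i' : Fin (n+1)) (j j' : Fin (m+1)),
        M i j * M i' j' = M i j' * M i' j := by
      intro i i' j j'
      have hmem : (X (i, j) * X (i', j') - X (i, j') * X (i', j) :
          MvPolynomial (Fin (n+1) × Fin (m+1)) k) ∈ 𝔭 :=
        h𝔭 (Ideal.mem_sup_left (Ideal.subset_span ⟨i, i', j, j', rfl⟩))
      have h0 := (hker _).mpr hmem
      rw [map_sub, map_mul, map_mul, sub_eq_zero] at h0
      exact h0
    have hsubf : ∀ (i : Fin r) (l : Fin (m+1)), eval₂ κ (fun i' => M i' l) (f i) = 0 := by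
      intro i l
      have hmem : (aeval (fun i' : Fin (n+1) => X (i', l)) (f i)) ∈ 𝔭 := by
        refine h𝔭 (Ideal.mem_sup_right ?_)
        rw [hJ']
        exact Ideal.subset_span (Or.inl ⟨(i, l), rfl⟩)
      have h0 := (hker _).mpr hmem
      rw [aeval_def, algebraMap_eq, eval₂_comp_left] at h0
      have h2 : (⇑ε ∘ fun i' : Fin (n+1) => X (i', l)) = fun i' => M i' l := by
        funext i'; rfl
      rwa [h2] at h0
    have hsubg : ∀ (j : Fin s) (t : Fin (n+1)), eval₂ κ (fun j' => M t j') (g j) = 0 := by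
      intro j t
      have hmem : (aeval (fun j' : Fin (m+1) => X (t, j')) (g j)) ∈ 𝔭 := by
        refine h𝔭 (Ideal.mem_sup_right ?_)
        rw [hJ']
        exact Ideal.subset_span (Or.inr ⟨(j, t), rfl⟩)
      have h0 := (hker _).mpr hmem
      rw [aeval_def, algebraMap_eq, eval₂_comp_left] at h0
      have h2 : (⇑ε ∘ fun j' : Fin (m+1) => X (t, j')) = fun j' => M t j' := by
        funext j'; rfl
      rwa [h2] at h0
    -- rank-one factorization of M with vanishing properties
    obtain ⟨u, v, huv, hu, hv⟩ :
        ∃ (u : Fin (n+1) → FractionRing (MvPolynomial (Fin (n+1) × Fin (m+1)) k ⧸ 𝔭))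
          (v : Fin (m+1) → FractionRing (MvPolynomial (Fin (n+1) × Fin (m+1)) k ⧸ 𝔭)),
        (∀ i j, M i j = u i * v j) ∧ (∀ i, eval₂ κ u (f i) = 0) ∧
          (∀ j, eval₂ κ v (g j) = 0) := by
      by_cases hM0 : ∀ i j, M i j = 0
      · refine ⟨0, 0, fun i j => by simp [hM0], fun i => ?_, fun j => ?_⟩
        · have h0 := hsubf i 0
          have : (fun i' : Fin (n+1) => M i' (0 : Fin (m+1)))
              = (0 : Fin (n+1) → FractionRing (MvPolynomial (Fin (n+1) × Fin (m+1)) k ⧸ 𝔭)) := by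
            funext i'; exact hM0 i' 0
          rwa [this] at h0
        · have h0 := hsubg j 0
          have : (fun j' : Fin (m+1) => M (0 : Fin (n+1)) j')
              = (0 : Fin (m+1) → FractionRing (MvPolynomial (Fin (n+1) × Fin (m+1)) k ⧸ 𝔭)) := by
            funext j'; exact hM0 0 j'
          rwa [this] at h0
      · push_neg at hM0
        obtain ⟨i₀, j₀, h₀⟩ := hM0
        refine ⟨fun i => (M i₀ j₀)⁻¹ * M i j₀, fun j => M i₀ j, fun i j => ?_, fun i => ?_,
          fun j => hsubg j i₀⟩
        · have h := hminor i i₀ j j₀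
          field_simp
          linear_combination h
        · rw [eval₂_mul_left_of_isHomogeneous κ (hf i) ((M i₀ j₀)⁻¹) (fun i' => M i' j₀),
            hsubf i j₀, mul_zero]
    -- conclude
    intro F hF
    rw [← hker F]
    have hΨF := (mem_segreIdeal a b F).mp hF
    set η : MvPolynomial (Fin (n+1) ⊕ Fin (m+1)) k →+*
        FractionRing (MvPolynomial (Fin (n+1) × Fin (m+1)) k ⧸ 𝔭) :=
      eval₂Hom κ (Sum.elim u v) with hη
    have hcker : a.map (rename (Sum.inl : Fin (n+1) → Fin (n+1) ⊕ Fin (m+1)))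
        ⊔ b.map (rename (Sum.inr : Fin (m+1) → Fin (n+1) ⊕ Fin (m+1)))
        ≤ RingHom.ker η := by
      apply sup_le <;> rw [Ideal.map_le_iff_le_comap, Ideal.span_le] <;>
        rintro q ⟨i, rfl⟩ <;>
        simp only [SetLike.mem_coe, Ideal.mem_comap, RingHom.mem_ker]
      · rw [hη, coe_eval₂Hom, eval₂_rename]
        exact hu i
      · rw [hη, coe_eval₂Hom, eval₂_rename]
        exact hv i
    have hfinal : ε F = η (aeval (fun p : Fin (n+1) × Fin (m+1) =>
        X (Sum.inl p.1) * X (Sum.inr p.2)) F) := by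
      rw [aeval_def, algebraMap_eq, eval₂_comp_left, hεeval F]
      have h1 : η.comp C = κ := by
        ext x
        simp [hη]
      have h2 : (η ∘ fun p : Fin (n+1) × Fin (m+1) => X (Sum.inl p.1) * X (Sum.inr p.2))
          = fun p => M p.1 p.2 := by
        funext p
        simp only [Function.comp_apply, map_mul, hη, eval₂Hom_X']
        rw [huv p.1 p.2]
        rfl
      rw [h1, h2]
    rw [hfinal]
    exact hcker hΨF
  -- assemble via radical = inf of primes
  rw [Ideal.radical_eq_sInf, Ideal.radical_eq_sInf]
  congr 1
  ext 𝔭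
  simp only [Set.mem_setOf_eq]
  exact ⟨fun ⟨h1, h2⟩ => ⟨le_trans hA h1, h2⟩, fun ⟨h1, h2⟩ => ⟨hB 𝔭 h2 h1, h2⟩⟩
end

section
/- Let k be a field, let F = x_n^d + Σ_{i=0}^{n−3} x_i G_i(x_0,…,x_n) with each G_i homogeneous of degree d−1, let X = V_+(F) ⊆ P^n, and let I be the ideal of P = k[z_{ij} : 0 ≤ i ≤ n, j = 0,1] defining the Segre product X × P^1 ⊆ P^{2n+1}. Then ara_h(I) ≤ 2n−1; explicitly, setting [i,j] = z_{i0}z_{j1} − z_{j0}z_{i1}, F_0 = F(z_{00},…,z_{n0}), F_1 = F(z_{01},…,z_{n1}), and h_t = Σ_{i<j, i+j=t}[i,j] for t = 1,…,2n−3, one has √I = √((h_1,…,h_{2n−3}, F_0, F_1)). -/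
set_option maxHeartbeats 2000000
set_option synthInstance.maxHeartbeats 1000000


/-!
STATEMENT 12: Let `k` be a field, let `F = xₙ^d + Σ_{i=0}^{n−3} xᵢ Gᵢ(x₀,…,xₙ)` with each
`Gᵢ` homogeneous of degree `d−1`, let `X = V₊(F) ⊆ ℙⁿ`, and let `I` be the ideal of
`P = k[z_{ij} : 0 ≤ i ≤ n, j = 0,1]` defining the Segre product `X × ℙ¹ ⊆ ℙ^{2n+1}`.
Then `ara_h(I) ≤ 2n−1`; explicitly, setting `[i,j] = z_{i0}z_{j1} − z_{j0}z_{i1}`,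
`F₀ = F(z₀₀,…,z_{n0})`, `F₁ = F(z₀₁,…,z_{n1})` and `h_t = Σ_{i<j, i+j=t} [i,j]` for
`t = 1,…,2n−3`, one has `√I = √((h₁,…,h_{2n−3},F₀,F₁))`.
-/

open MvPolynomial

lemma eval₂_smul_of_isHomogeneousAux {k A : Type*} [CommSemiring k] [CommSemiring A]
    {σ : Type*} {F : MvPolynomial σ k} {d : ℕ} (hF : F.IsHomogeneous d)
    (χ : k →+* A) (r : A) (g : σ → A) :
    eval₂ χ (fun i => r * g i) F = r ^ d * eval₂ χ g F := by
  rw [eval₂_eq, eval₂_eq, Finset.mul_sum]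
  refine Finset.sum_congr rfl fun m hm => ?_
  have hdeg : ∑ i ∈ m.support, m i = d := by
    have := hF (mem_support_iff.mp hm)
    rw [← this, Finsupp.weight_apply]
    simp [Finsupp.sum]
  calc χ (coeff m F) * ∏ i ∈ m.support, (r * g i) ^ m i
      = χ (coeff m F) * ((∏ i ∈ m.support, r ^ m i) * ∏ i ∈ m.support, g i ^ m i) := by
        rw [← Finset.prod_mul_distrib]; simp [mul_pow]
    _ = r ^ d * (χ (coeff m F) * ∏ i ∈ m.support, g i ^ m i) := by
        rw [Finset.prod_pow_eq_pow_sum, hdeg]; ring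


lemma segre_domain_keyAux {D : Type*} [CommRing D] [IsDomain D] {n d : ℕ}
    (hn : 2 ≤ n) (hd : 1 ≤ d)
    (v w : Fin (n+1) → D) (a b : Fin (n-2) → D)
    (hH : ∀ t : ℕ, 1 ≤ t → t ≤ 2*n-3 →
      ∑ p ∈ Finset.univ.filter
        (fun p : Fin (n+1) × Fin (n+1) => p.1 < p.2 ∧ (p.1:ℕ)+(p.2:ℕ) = t),
        (v p.1 * w p.2 - v p.2 * w p.1) = 0)
    (hFv : v (Fin.last n) ^ d + ∑ i : Fin (n-2), v (Fin.castLE (le_trans (Nat.sub_le n 2) (Nat.le_succ n)) i) * a i = 0)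
    (hFw : w (Fin.last n) ^ d + ∑ i : Fin (n-2), w (Fin.castLE (le_trans (Nat.sub_le n 2) (Nat.le_succ n)) i) * b i = 0) :
    ∀ i j : Fin (n+1), v i * w j = v j * w i := by
  have small : ∀ t : ℕ, ∀ i j : Fin (n+1), (i:ℕ)+(j:ℕ) = t → t ≤ 2*n-3 →
      v i * w j = v j * w i := by
    intro t
    induction t using Nat.strong_induction_on with
    | _ t IH =>
      have key : ∀ i j : Fin (n+1), i < j → (i:ℕ)+(j:ℕ) = t → t ≤ 2*n-3 →
          v i * w j - v j * w i = 0 := by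
        intro i j hij hsum hle
        set S := Finset.univ.filter
          (fun p : Fin (n+1) × Fin (n+1) => p.1 < p.2 ∧ (p.1:ℕ)+(p.2:ℕ) = t) with hSdef
        have hmem : (i,j) ∈ S := by simp [hSdef, hij, hsum]
        have ht1 : 1 ≤ t := by
          have : (i:ℕ) < (j:ℕ) := hij
          omega
        have hS : ∑ p ∈ S, (v p.1 * w p.2 - v p.2 * w p.1) = 0 := hH t ht1 hle
        have cross : ∀ p ∈ S, p ≠ (i,j) →
            (v i * w j - v j * w i) * (v p.1 * w p.2 - v p.2 * w p.1) = 0 := by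
          rintro ⟨x, y⟩ hp hne
          simp only [hSdef, Finset.mem_filter] at hp
          obtain ⟨-, hxy, hsum'⟩ := hp
          have hxi : (x:ℕ) ≠ (i:ℕ) := by
            intro h
            apply hne
            have hx : x = i := Fin.ext h
            have hy : y = j := Fin.ext (by omega)
            rw [hx, hy]
          rcases lt_or_gt_of_ne hxi with hlt | hgt
          · -- x < i < j, and j < y? no: x < i ⇒ y > j. chain x < i < j < y? x+y=t=i+j, x<i ⇒ y>j.
            -- order: x < i ≤ ? i < j < y. minors (x,i),(x,j) have sums < t.
            have e1 : v x * w i = v i * w x :=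
              IH ((x:ℕ)+(i:ℕ)) (by omega) x i rfl (by omega)
            have e2 : v x * w j = v j * w x :=
              IH ((x:ℕ)+(j:ℕ)) (by omega) x j rfl (by omega)
            linear_combination (v y * w j - v j * w y) * e1 + (v i * w y - v y * w i) * e2
          · -- i < x < y < j
            have e1 : v i * w x = v x * w i :=
              IH ((i:ℕ)+(x:ℕ)) (by omega) i x rfl (by omega)
            have e2 : v i * w y = v y * w i :=
              IH ((i:ℕ)+(y:ℕ)) (by omega) i y rfl (by omega)
            linear_combination (v j * w y - v y * w j) * e1 + (v x * w j - v j * w x) * e2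
        have hsq : (v i * w j - v j * w i) * (v i * w j - v j * w i) = 0 := by
          have expand : ∑ p ∈ S, (v p.1 * w p.2 - v p.2 * w p.1)
              = (v i * w j - v j * w i)
                + ∑ p ∈ S.erase (i,j), (v p.1 * w p.2 - v p.2 * w p.1) :=
            (Finset.add_sum_erase S _ hmem).symm
          have h0 : (v i * w j - v j * w i)
              * ((v i * w j - v j * w i)
                + ∑ p ∈ S.erase (i,j), (v p.1 * w p.2 - v p.2 * w p.1)) = 0 := by
            rw [← expand, hS, mul_zero]
          rw [mul_add, Finset.mul_sum] at h0
          have hrest : ∑ p ∈ S.erase (i,j),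
              (v i * w j - v j * w i) * (v p.1 * w p.2 - v p.2 * w p.1) = 0 :=
            Finset.sum_eq_zero fun p hp =>
              cross p (Finset.mem_of_mem_erase hp) (Finset.ne_of_mem_erase hp)
          rw [hrest, add_zero] at h0
          exact h0
        exact mul_self_eq_zero.mp hsq
      intro i j hsum hle
      rcases lt_trichotomy i j with h | h | h
      · exact sub_eq_zero.mp (key i j h hsum hle)
      · rw [h]
      · exact (sub_eq_zero.mp (key j i h (by omega) hle)).symm
  -- the two extra minors
  have extra : ∀ c : Fin (n+1), ((c:ℕ) = n-2 ∨ (c:ℕ) = n-1) →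
      v c * w (Fin.last n) = v (Fin.last n) * w c := by
    intro c hc
    have hcle : (c:ℕ) ≤ n - 1 := by rcases hc with h|h <;> omega
    set L := Fin.last n with hL
    have hLval : (L:ℕ) = n := rfl
    set m := v c * w L - v L * w c with hm
    have hvim : ∀ i : Fin (n-2), v (Fin.castLE (by omega) i) * m = 0 := by
      intro i
      set i' : Fin (n+1) := Fin.castLE (by omega) i with hi'
      have hi'val : (i':ℕ) = (i:ℕ) := rfl
      have hibd : (i:ℕ) < n - 2 := i.isLt
      have e1 : v i' * w L = v L * w i' :=
        small ((i':ℕ)+(L:ℕ)) i' L rfl (by omega)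
      have e2 : v i' * w c = v c * w i' :=
        small ((i':ℕ)+(c:ℕ)) i' c rfl (by omega)
      rw [hm]
      linear_combination v c * e1 - v L * e2
    have hwim : ∀ i : Fin (n-2), w (Fin.castLE (by omega) i) * m = 0 := by
      intro i
      set i' : Fin (n+1) := Fin.castLE (by omega) i with hi'
      have hi'val : (i':ℕ) = (i:ℕ) := rfl
      have hibd : (i:ℕ) < n - 2 := i.isLt
      have e1 : v i' * w L = v L * w i' :=
        small ((i':ℕ)+(L:ℕ)) i' L rfl (by omega)
      have e2 : v i' * w c = v c * w i' :=
        small ((i':ℕ)+(c:ℕ)) i' c rfl (by omega)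
      rw [hm]
      linear_combination w c * e1 - w L * e2
    have h1 : v L ^ d * m = 0 := by
      have hv : v L ^ d = -∑ i : Fin (n-2), v (Fin.castLE (by omega) i) * a i :=
        eq_neg_of_add_eq_zero_left hFv
      rw [hv, neg_mul, Finset.sum_mul, neg_eq_zero]
      refine Finset.sum_eq_zero fun i _ => ?_
      have := hvim i
      linear_combination a i * this
    have h2 : w L ^ d * m = 0 := by
      have hw : w L ^ d = -∑ i : Fin (n-2), w (Fin.castLE (by omega) i) * b i :=
        eq_neg_of_add_eq_zero_left hFw
      rw [hw, neg_mul, Finset.sum_mul, neg_eq_zero]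
      refine Finset.sum_eq_zero fun i _ => ?_
      have := hwim i
      linear_combination b i * this
    by_contra hne
    have hmne : m ≠ 0 := fun h => hne (sub_eq_zero.mp (by rw [hm] at h; exact h))
    have hvL : v L = 0 := by
      rcases mul_eq_zero.mp h1 with h | h
      · exact pow_eq_zero_iff (by omega) |>.mp h
      · exact absurd h hmne
    have hwL : w L = 0 := by
      rcases mul_eq_zero.mp h2 with h | h
      · exact pow_eq_zero_iff (by omega) |>.mp h
      · exact absurd h hmne
    apply hmne
    rw [hm, hvL, hwL, mul_zero, zero_mul, sub_zero]
  -- conclude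
  intro i j
  by_cases hle : (i:ℕ)+(j:ℕ) ≤ 2*n-3
  · exact small _ i j rfl hle
  · push_neg at hle
    rcases lt_trichotomy i j with h | h | h
    · have hij : (i:ℕ) < (j:ℕ) := h
      have hjn : (j:ℕ) = n := by have := j.isLt; have := i.isLt; omega
      have hjL : j = Fin.last n := Fin.ext hjn
      have hci : (i:ℕ) = n-2 ∨ (i:ℕ) = n-1 := by have := i.isLt; omega
      rw [hjL]
      exact extra i hci
    · rw [h]
    · have hij : (j:ℕ) < (i:ℕ) := h
      have hin : (i:ℕ) = n := by have := j.isLt; have := i.isLt; omega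
      have hiL : i = Fin.last n := Fin.ext hin
      have hcj : (j:ℕ) = n-2 ∨ (j:ℕ) = n-1 := by have := j.isLt; omega
      rw [hiL]
      exact (extra j hcj).symm




/-- homogeneous arithmetical rank -/
noncomputable def araH {k : Type*} [CommRing k] {σ : Type*} (I : Ideal (MvPolynomial σ k)) : ℕ :=
  sInf {t | ∃ f : Fin t → MvPolynomial σ k, (∀ i, ∃ d, (f i).IsHomogeneous d) ∧
    (Ideal.span (Set.range f)).radical = I.radical}

/-- the 2-minor `[i,j] = z_{i0} z_{j1} - z_{j0} z_{i1}` -/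
noncomputable def minor {k : Type*} [Field k] {n : ℕ} (i j : Fin (n+1)) :
    MvPolynomial (Fin (n+1) × Fin 2) k :=
  X (i, 0) * X (j, 1) - X (j, 0) * X (i, 1)

/-- `h_t = Σ_{i<j, i+j=t} [i,j]` -/
noncomputable def hPoly {k : Type*} [Field k] {n : ℕ} (t : ℕ) :
    MvPolynomial (Fin (n+1) × Fin 2) k :=
  ∑ p ∈ Finset.univ.filter
      (fun p : Fin (n+1) × Fin (n+1) => p.1 < p.2 ∧ (p.1 : ℕ) + (p.2 : ℕ) = t),
    minor p.1 p.2

/-- `F` evaluated on the `j`-th column of the matrix `(z_{ij})` -/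
noncomputable def colSubst {k : Type*} [Field k] {n : ℕ} (j : Fin 2)
    (F : MvPolynomial (Fin (n+1)) k) : MvPolynomial (Fin (n+1) × Fin 2) k :=
  MvPolynomial.aeval (fun i : Fin (n+1) => X (i, j)) F

lemma mem_segre_iffAux (k : Type*) [Field k] (n : ℕ) (F : MvPolynomial (Fin (n+1)) k)
    (g : MvPolynomial (Fin (n+1) × Fin 2) k) :
    g ∈ segreIdeal k n 1 (Ideal.span {F}) ⊥ ↔
      (aeval (fun p : Fin (n+1) × Fin 2 =>
          (X (Sum.inl p.1) * X (Sum.inr p.2) : MvPolynomial (Fin (n+1) ⊕ Fin 2) k)) g)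
        ∈ Ideal.span {rename (Sum.inl : Fin (n+1) → Fin (n+1) ⊕ Fin 2) F} := by
  set I₀ : Ideal (MvPolynomial (Fin (n+1) ⊕ Fin 2) k) :=
    (Ideal.span {F}).map (rename (Sum.inl : Fin (n+1) → Fin (n+1) ⊕ Fin 2))
      ⊔ (⊥ : Ideal (MvPolynomial (Fin 2) k)).map
          (rename (Sum.inr : Fin 2 → Fin (n+1) ⊕ Fin 2)) with hI₀
  have hI₀eq : I₀ = Ideal.span {rename (Sum.inl : Fin (n+1) → Fin (n+1) ⊕ Fin 2) F} := by
    rw [hI₀, Ideal.map_bot, sup_bot_eq, Ideal.map_span, Set.image_singleton]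
  have hcomp :
      (aeval (R := k) (fun p : Fin (n+1) × Fin 2 =>
        Ideal.Quotient.mk I₀ (X (Sum.inl p.1) * X (Sum.inr p.2)))) g
      = Ideal.Quotient.mk I₀ (aeval (fun p : Fin (n+1) × Fin 2 =>
          (X (Sum.inl p.1) * X (Sum.inr p.2) : MvPolynomial (Fin (n+1) ⊕ Fin 2) k)) g) := by
    have : (aeval (R := k) (fun p : Fin (n+1) × Fin 2 =>
        Ideal.Quotient.mk I₀ (X (Sum.inl p.1) * X (Sum.inr p.2))))
        = (Ideal.Quotient.mkₐ k I₀).comp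
            (aeval (fun p : Fin (n+1) × Fin 2 =>
              (X (Sum.inl p.1) * X (Sum.inr p.2) : MvPolynomial (Fin (n+1) ⊕ Fin 2) k))) := by
      apply MvPolynomial.algHom_ext
      intro p
      simp
    rw [this]
    rfl
  constructor
  · intro hg
    have : (aeval (R := k) (fun p : Fin (n+1) × Fin 2 =>
        Ideal.Quotient.mk I₀ (X (Sum.inl p.1) * X (Sum.inr p.2)))) g = 0 :=
      (RingHom.mem_ker.mp hg : _)
    rw [hcomp] at this
    rw [← hI₀eq]
    exact (Ideal.Quotient.eq_zero_iff_mem).mp this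
  · intro hg
    rw [← hI₀eq] at hg
    refine RingHom.mem_ker.mpr ?_
    rw [hcomp]
    exact (Ideal.Quotient.eq_zero_iff_mem).mpr hg


theorem araH_le_of_special_hypersurface_prod_P1
    (k : Type*) [Field k] (n d : ℕ) (hn : 2 ≤ n) (hd : 1 ≤ d)
    (G : Fin (n-2) → MvPolynomial (Fin (n+1)) k)
    (hG : ∀ i, (G i).IsHomogeneous (d-1))
    (F : MvPolynomial (Fin (n+1)) k)
    (hF : F = X (Fin.last n) ^ d
      + ∑ i : Fin (n-2), X (Fin.castLE (by omega) i) * G i) :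
    (Ideal.span ({colSubst 0 F, colSubst 1 F} ∪
        Set.range (fun t : Fin (2*n-3) => hPoly (k := k) (n := n) (t + 1)))).radical
      = (segreIdeal k n 1 (Ideal.span {F}) ⊥).radical ∧
    araH (segreIdeal k n 1 (Ideal.span {F}) ⊥) ≤ 2*n - 1 := by
  classical
  have hFd : F.IsHomogeneous d := by
    rw [hF]
    apply MvPolynomial.IsHomogeneous.add
    · exact isHomogeneous_X_pow _ _
    · apply MvPolynomial.IsHomogeneous.sum
      intro i _
      have h1 : (1 : ℕ) + (d - 1) = d := by omega
      exact h1 ▸ (isHomogeneous_X _ _).mul (hG i)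
  set ψ : MvPolynomial (Fin (n+1) × Fin 2) k →ₐ[k] MvPolynomial (Fin (n+1) ⊕ Fin 2) k :=
    aeval (fun p : Fin (n+1) × Fin 2 => X (Sum.inl p.1) * X (Sum.inr p.2)) with hψ
  have hmem : ∀ g, g ∈ segreIdeal k n 1 (Ideal.span {F}) ⊥ ↔
      ψ g ∈ Ideal.span {rename (Sum.inl : Fin (n+1) → Fin (n+1) ⊕ Fin 2) F} :=
    fun g => mem_segre_iffAux k n F g
  have hminor0 : ∀ i j : Fin (n+1), ψ (minor (k := k) i j) = 0 := by
    intro i j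
    simp only [hψ, minor, map_sub, map_mul, aeval_X]
    ring
  have hhsub : ∀ t, ψ (hPoly (k := k) (n := n) t) = 0 := by
    intro t
    simp only [hPoly, map_sum]
    exact Finset.sum_eq_zero fun p _ => hminor0 _ _
  have hren : rename (Sum.inl : Fin (n+1) → Fin (n+1) ⊕ Fin 2) F
      = eval₂ (C : k →+* MvPolynomial (Fin (n+1) ⊕ Fin 2) k)
          (fun i => X (Sum.inl i)) F := by
    rw [rename, ← MvPolynomial.algebraMap_eq, ← aeval_def]
    show (rename (Sum.inl : Fin (n+1) → Fin (n+1) ⊕ Fin 2)) F = _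
    congr 1
    exact MvPolynomial.algHom_ext fun i => by simp
  have hcolψ : ∀ j : Fin 2, ψ (colSubst j F)
      = X (Sum.inr j) ^ d * rename (Sum.inl : Fin (n+1) → Fin (n+1) ⊕ Fin 2) F := by
    intro j
    have h1 : ψ (colSubst j F)
        = aeval (fun i : Fin (n+1) =>
            (X (Sum.inl i) * X (Sum.inr j) : MvPolynomial (Fin (n+1) ⊕ Fin 2) k)) F := by
      rw [colSubst, ← AlgHom.comp_apply, comp_aeval]
      simp [hψ]
    rw [h1, aeval_def, MvPolynomial.algebraMap_eq]
    have h2 : (fun i : Fin (n+1) =>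
        (X (Sum.inl i) * X (Sum.inr j) : MvPolynomial (Fin (n+1) ⊕ Fin 2) k))
        = fun i => X (Sum.inr j) * X (Sum.inl i) := by
      funext i; ring
    rw [h2, eval₂_smul_of_isHomogeneousAux hFd, hren]
  set Jset : Set (MvPolynomial (Fin (n+1) × Fin 2) k) :=
    {colSubst 0 F, colSubst 1 F} ∪
      Set.range (fun t : Fin (2*n-3) => hPoly (k := k) (n := n) (t + 1)) with hJset
  set I := segreIdeal k n 1 (Ideal.span {F}) ⊥ with hIdef
  have hJI : Ideal.span Jset ≤ I := by
    rw [Ideal.span_le]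
    rintro x (hx | ⟨t, rfl⟩)
    · rcases hx with rfl | rfl
      · refine (hmem _).mpr ?_
        rw [hcolψ]
        exact Ideal.mem_span_singleton.mpr (dvd_mul_left _ _)
      · refine (hmem _).mpr ?_
        rw [hcolψ]
        exact Ideal.mem_span_singleton.mpr (dvd_mul_left _ _)
    · refine (hmem _).mpr ?_
      rw [hhsub]
      exact zero_mem _
  have hIJ : I ≤ (Ideal.span Jset).radical := by
    rw [Ideal.radical_eq_sInf]
    refine le_sInf ?_
    rintro p ⟨hJp, hp⟩
    intro g hg
    set π : MvPolynomial (Fin (n+1) × Fin 2) k →+* (MvPolynomial (Fin (n+1) × Fin 2) k ⧸ p) :=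
      Ideal.Quotient.mk p with hπ
    set v : Fin (n+1) → (MvPolynomial (Fin (n+1) × Fin 2) k ⧸ p) :=
      fun i => π (X (i, 0)) with hv
    set w : Fin (n+1) → (MvPolynomial (Fin (n+1) × Fin 2) k ⧸ p) :=
      fun i => π (X (i, 1)) with hw
    have hπJ : ∀ x ∈ Jset, π x = 0 := fun x hx =>
      Ideal.Quotient.eq_zero_iff_mem.mpr (hJp (Ideal.subset_span hx))
    have hps : ∀ i j : Fin (n+1), π (minor (k := k) i j) = v i * w j - v j * w i := by
      intro i j
      simp [minor, map_sub, map_mul, hv, hw]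
    have hH : ∀ t : ℕ, 1 ≤ t → t ≤ 2*n-3 →
        ∑ q ∈ Finset.univ.filter
          (fun q : Fin (n+1) × Fin (n+1) => q.1 < q.2 ∧ (q.1:ℕ)+(q.2:ℕ) = t),
          (v q.1 * w q.2 - v q.2 * w q.1) = 0 := by
      intro t ht1 ht2
      have hmemJ : hPoly (k := k) (n := n) t ∈ Jset := by
        have hfn : (fun u : Fin (2*n-3) => hPoly (k := k) (n := n) ((u : ℕ) + 1))
            ⟨t-1, by omega⟩ = hPoly (k := k) (n := n) t := by
          show hPoly (k := k) (n := n) ((t-1) + 1) = hPoly (k := k) (n := n) t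
          congr 1
          omega
        exact Set.mem_union_right _ ⟨⟨t-1, by omega⟩, hfn⟩
      have h0 := hπJ _ hmemJ
      rw [hPoly, map_sum] at h0
      rw [← h0]
      exact Finset.sum_congr rfl fun q _ => (hps q.1 q.2).symm
    have hcol : ∀ j : Fin 2, ∀ u : Fin (n+1) → _,
        u = (fun i => π (X (i, j))) →
        π (colSubst j F) = u (Fin.last n) ^ d
          + ∑ i : Fin (n-2), u (Fin.castLE (by omega) i) * π (colSubst j (G i)) := by
      intro j u hu
      subst hu
      rw [hF]
      simp only [colSubst, map_add, map_pow, map_sum, map_mul, aeval_X]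
    have hFv : v (Fin.last n) ^ d
        + ∑ i : Fin (n-2), v (Fin.castLE (by omega) i) * π (colSubst 0 (G i)) = 0 := by
      rw [← hcol 0 v hv]
      exact hπJ _ (Set.mem_union_left _ (Set.mem_insert _ _))
    have hFw : w (Fin.last n) ^ d
        + ∑ i : Fin (n-2), w (Fin.castLE (by omega) i) * π (colSubst 1 (G i)) = 0 := by
      rw [← hcol 1 w hw]
      exact hπJ _ (Set.mem_union_left _ (Set.mem_insert_of_mem _ rfl))
    haveI : p.IsPrime := hp
    have hmins : ∀ i j : Fin (n+1), v i * w j = v j * w i :=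
      segre_domain_keyAux hn hd v w
        (fun i => π (colSubst 0 (G i))) (fun i => π (colSubst 1 (G i))) hH hFv hFw
    set K := FractionRing (MvPolynomial (Fin (n+1) × Fin 2) k ⧸ p) with hK
    set ι : (MvPolynomial (Fin (n+1) × Fin 2) k ⧸ p) →+* K :=
      algebraMap (MvPolynomial (Fin (n+1) × Fin 2) k ⧸ p) K with hι
    have hinj : Function.Injective ι :=
      IsFractionRing.injective (MvPolynomial (Fin (n+1) × Fin 2) k ⧸ p) K
    set χ₀ : k →+* K := ι.comp (π.comp (C : k →+* MvPolynomial (Fin (n+1) × Fin 2) k)) with hχ₀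
    have hbridge : ∀ (j : Fin 2) (q : MvPolynomial (Fin (n+1)) k),
        ι (π (colSubst j q)) = eval₂ χ₀ (fun i => ι (π (X (i, j)))) q := by
      intro j q
      rw [colSubst, aeval_def, MvPolynomial.algebraMap_eq, eval₂_comp_left π,
        eval₂_comp_left ι]
      rfl
    obtain ⟨s, t, hs0, hs1, hFs⟩ :
        ∃ (s : Fin (n+1) → K) (t : Fin 2 → K),
          (∀ i, ι (v i) = s i * t 0) ∧ (∀ i, ι (w i) = s i * t 1) ∧ eval₂ χ₀ s F = 0 := by
      by_cases hvz : ∀ i, v i = 0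
      · refine ⟨fun i => ι (w i), fun j => if j = 0 then 0 else 1, ?_, ?_, ?_⟩
        · intro i; simp [hvz i]
        · intro i; simp
        · have h1 : π (colSubst 1 F) = 0 :=
            hπJ _ (Set.mem_union_left _ (Set.mem_insert_of_mem _ rfl))
          have h2 := hbridge 1 F
          rw [h1, map_zero] at h2
          exact h2.symm
      · push_neg at hvz
        obtain ⟨i₀, hi₀⟩ := hvz
        have hVi₀ : ι (v i₀) ≠ 0 := fun h => hi₀ (hinj (by rw [h, map_zero]))
        refine ⟨fun i => ι (v i), fun j => if j = 0 then 1 else ι (w i₀) / ι (v i₀),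
          ?_, ?_, ?_⟩
        · intro i; simp
        · intro i
          have key := congrArg ι (hmins i i₀)
          rw [map_mul, map_mul] at key
          show ι (w i) = ι (v i) * (if (1 : Fin 2) = 0 then 1 else ι (w i₀) / ι (v i₀))
          rw [if_neg (by decide : ¬ (1 : Fin 2) = 0), mul_div_assoc', eq_comm, div_eq_iff hVi₀]
          linear_combination key
        · have h1 : π (colSubst 0 F) = 0 :=
            hπJ _ (Set.mem_union_left _ (Set.mem_insert _ _))
          have h2 := hbridge 0 F
          rw [h1, map_zero] at h2
          exact h2.symm
    set e : MvPolynomial (Fin (n+1) ⊕ Fin 2) k →+* K := eval₂Hom χ₀ (Sum.elim s t) with he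
    have hcomm : ι.comp π = e.comp ψ.toRingHom := by
      apply MvPolynomial.ringHom_ext
      · intro r
        simp [he, hψ, hχ₀]
      · rintro ⟨i, j⟩
        fin_cases j
        · simpa [he, hψ] using hs0 i
        · simpa [he, hψ] using hs1 i
    obtain ⟨c, hc⟩ := Ideal.mem_span_singleton'.mp ((hmem g).mp hg)
    have hgz : ι (π g) = 0 := by
      have h3 : ι (π g) = e (ψ g) := RingHom.congr_fun hcomm g
      rw [h3, ← hc, map_mul]
      have h4 : e (rename (Sum.inl : Fin (n+1) → Fin (n+1) ⊕ Fin 2) F)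
          = eval₂ χ₀ s F := by
        rw [he, coe_eval₂Hom, eval₂_rename]
        rfl
      rw [h4, hFs, mul_zero]
    have hπg : π g = 0 := hinj (by rw [hgz, map_zero])
    exact Ideal.Quotient.eq_zero_iff_mem.mp hπg
  have hrad : (Ideal.span Jset).radical = I.radical :=
    le_antisymm (Ideal.radical_mono hJI)
      ((Ideal.radical_idem (Ideal.span Jset)) ▸ Ideal.radical_mono hIJ)
  refine ⟨hrad, ?_⟩
  have hhomh : ∀ t : ℕ, (hPoly (k := k) (n := n) t).IsHomogeneous 2 := by
    intro t
    apply MvPolynomial.IsHomogeneous.sum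
    intro q _
    exact ((isHomogeneous_X _ _).mul (isHomogeneous_X _ _)).sub
      ((isHomogeneous_X _ _).mul (isHomogeneous_X _ _))
  have hhomc : ∀ j : Fin 2, (colSubst j F).IsHomogeneous d := by
    intro j
    have := hFd.aeval (fun i : Fin (n+1) => (X (i, j) : MvPolynomial (Fin (n+1) × Fin 2) k))
      (fun i => isHomogeneous_X _ _)
    rw [one_mul] at this
    exact this
  set f : Fin (2*n-1) → MvPolynomial (Fin (n+1) × Fin 2) k := fun i =>
    if (i:ℕ) < 2*n-3 then hPoly (k := k) (n := n) ((i:ℕ)+1)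
    else if (i:ℕ) = 2*n-3 then colSubst 0 F else colSubst 1 F with hf
  have hfval : ∀ m : ℕ, ∀ hm : m < 2*n-1, f ⟨m, hm⟩
      = (if m < 2*n-3 then hPoly (k := k) (n := n) (m+1)
        else if m = 2*n-3 then colSubst 0 F else colSubst 1 F) := fun m hm => rfl
  have hrange : Set.range f = Jset := by
    ext x
    constructor
    · rintro ⟨i, rfl⟩
      by_cases h1 : (i:ℕ) < 2*n-3
      · refine Set.mem_union_right _ ⟨⟨i, h1⟩, ?_⟩
        show hPoly (k := k) (n := n) ((i:ℕ)+1) = f i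
        rw [hf]
        simp only [if_pos h1]
      · by_cases h2 : (i:ℕ) = 2*n-3
        · refine Set.mem_union_left _ (Set.mem_insert_iff.mpr (Or.inl ?_))
          rw [hf]
          simp only [if_neg h1, if_pos h2]
        · refine Set.mem_union_left _ (Set.mem_insert_of_mem _ ?_)
          rw [hf]
          simp only [if_neg h1, if_neg h2]
          rfl
    · rintro (hx | ⟨u, rfl⟩)
      · rcases hx with rfl | rfl
        · refine ⟨⟨2*n-3, by omega⟩, ?_⟩
          rw [hfval]
          rw [if_neg (lt_irrefl _), if_pos rfl]
        · refine ⟨⟨2*n-2, by omega⟩, ?_⟩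
          rw [hfval]
          rw [if_neg (by omega), if_neg (by omega)]
      · refine ⟨⟨(u:ℕ), by omega⟩, ?_⟩
        rw [hfval]
        rw [if_pos u.isLt]
  refine Nat.sInf_le ⟨f, ?_, ?_⟩
  · intro i
    by_cases h1 : (i:ℕ) < 2*n-3
    · refine ⟨2, ?_⟩
      rw [hf]
      simp only [if_pos h1]
      exact hhomh _
    · by_cases h2 : (i:ℕ) = 2*n-3
      · refine ⟨d, ?_⟩
        rw [hf]
        simp only [if_neg h1, if_pos h2]
        exact hhomc 0
      · refine ⟨d, ?_⟩
        rw [hf]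
        simp only [if_neg h1, if_neg h2]
        exact hhomc 1
  · rw [hrange]
    exact hrad
end
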